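/- Suppose F : ℝ^d → ℝ is L-Lipschitz and let F̂_δ be its uniform smoothing. If the Goldstein δ-stationarity measure of F̂_δ at x satisfies ‖∇F̂_δ(x)‖_δ ≤ ε, then ‖∇F(x)‖_{2δ} ≤ ε. -/

import Mathlib

open MeasureTheory Metric

/-- The Goldstein `δ`-subdifferential `∂_δ h(x) = conv(⋃_{y ∈ B(x,δ)} ∇h(y))`, taken over
points of differentiability. -/
noncomputable def goldsteinSubdiff {d : ℕ} (h : EuclideanSpace ℝ (Fin d) → ℝ) (δ : ℝ)
    (x : EuclideanSpace ℝ (Fin d)) : Set (EuclideanSpace ℝ (Fin d)) :=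
  convexHull ℝ {g | ∃ y ∈ ball x δ, DifferentiableAt ℝ h y ∧ gradient h y = g}

/-- The Goldstein stationarity measure `‖∇h(x)‖_δ = inf{‖g‖ : g ∈ ∂_δ h(x)}`. -/
noncomputable def goldsteinNorm {d : ℕ} (h : EuclideanSpace ℝ (Fin d) → ℝ) (δ : ℝ)
    (x : EuclideanSpace ℝ (Fin d)) : ℝ :=
  sInf (norm '' goldsteinSubdiff h δ x)

/-- The uniform probability measure on the closed unit Euclidean ball in `ℝ^d`. -/
noncomputable def unifBall (d : ℕ) : Measure (EuclideanSpace ℝ (Fin d)) :=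
  (volume (closedBall (0 : EuclideanSpace ℝ (Fin d)) 1))⁻¹ •
    volume.restrict (closedBall (0 : EuclideanSpace ℝ (Fin d)) 1)

open intervalIntegral Filter Topology InnerProductSpace

set_option maxHeartbeats 1000000

private theorem seq_slope {f : ℝ → ℝ} {c a : ℝ} (hd : HasDerivAt f c a) {h : ℕ → ℝ}
    (hh0 : Filter.Tendsto h atTop (𝓝 0)) (hhpos : ∀ n, 0 < h n) :
    Tendsto (fun n => (f (a + h n) - f a) / h n) atTop (𝓝 c) := by
  rw [hasDerivAt_iff_tendsto_slope] at hd
  have hseq : Tendsto (fun n => a + h n) atTop (𝓝[≠] a) := by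
    apply tendsto_nhdsWithin_of_tendsto_nhds_of_eventually_within
    · simpa using (tendsto_const_nhds.add hh0)
    · exact Eventually.of_forall fun n => by simp [Set.mem_setOf_eq, (hhpos n).ne']
  have h2 := hd.comp hseq
  have : (fun n => (f (a + h n) - f a) / h n) = slope f a ∘ fun n => a + h n := by
    funext n; simp [slope, Function.comp, add_sub_cancel_left, div_eq_inv_mul]
  rw [this]; exact h2

/-- FTC for Lipschitz functions on ℝ. -/
private theorem lip_ftc {f : ℝ → ℝ} {K : NNReal} (hf : LipschitzWith K f) {t : ℝ} (ht : 0 < t) :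
    f t - f 0 = ∫ s in Set.Ioc 0 t, deriv f s := by
  have hcont : Continuous f := hf.continuous
  have hae : ∀ᵐ s, DifferentiableAt ℝ f s := hf.ae_differentiableAt
  set G : ℝ → ℝ := fun y => ∫ s in (0:ℝ)..y, f s with hG
  have hGd : ∀ y : ℝ, HasDerivAt G (f y) y := fun y =>
    integral_hasDerivAt_right (hcont.intervalIntegrable 0 y)
      (hcont.stronglyMeasurable.stronglyMeasurableAtFilter) hcont.continuousAt
  set h : ℕ → ℝ := fun n => ((n : ℝ) + 1)⁻¹ with hh
  have hhpos : ∀ n, 0 < h n := fun n => by positivity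
  have hh0 : Tendsto h atTop (𝓝 0) := by
    simpa [hh, one_div] using tendsto_one_div_add_atTop_nhds_zero_nat (𝕜 := ℝ)
  set q : ℕ → ℝ → ℝ := fun n s => (f (s + h n) - f s) / h n with hq
  have hptwise : ∀ᵐ s, Tendsto (fun n => q n s) atTop (𝓝 (deriv f s)) := by
    filter_upwards [hae] with s hs
    exact seq_slope hs.hasDerivAt hh0 hhpos
  have hbound : ∀ n, ∀ᵐ s ∂(volume.restrict (Set.Ioc 0 t)), ‖q n s‖ ≤ (K : ℝ) := by
    intro n
    refine Eventually.of_forall fun s => ?_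
    have := hf.dist_le_mul (s + h n) s
    simp only [Real.dist_eq, add_sub_cancel_left] at this
    rw [Real.norm_eq_abs, hq, abs_div, abs_of_pos (hhpos n), div_le_iff₀ (hhpos n)]
    simpa [abs_of_pos (hhpos n)] using this
  have hlim1 : Tendsto (fun n => ∫ s in Set.Ioc 0 t, q n s) atTop
      (𝓝 (∫ s in Set.Ioc 0 t, deriv f s)) := by
    refine tendsto_integral_of_dominated_convergence (fun _ => (K : ℝ)) ?_ ?_ hbound ?_
    · exact fun n => ((hcont.comp (continuous_add_right (h n))).sub hcont).div_const
        _ |>.aestronglyMeasurable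
    · exact integrable_const _
    · exact (ae_restrict_of_ae hptwise)
  have heval : ∀ n, ∫ s in Set.Ioc 0 t, q n s =
      ((G (t + h n) - G t) - (G (0 + h n) - G 0)) / h n := by
    intro n
    rw [← intervalIntegral.integral_of_le ht.le]
    simp only [hq, div_eq_mul_inv]
    rw [intervalIntegral.integral_mul_const, intervalIntegral.integral_sub
        ((Continuous.intervalIntegrable (by continuity : Continuous fun x : ℝ => f (x + h n)) 0 t))
        (hcont.intervalIntegrable 0 t)]
    rw [intervalIntegral.integral_comp_add_right]
    congr 1
    have h1 : (∫ s in (0 + h n)..(t + h n), f s) = G (t + h n) - G (0 + h n) := by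
      have hadj := intervalIntegral.integral_add_adjacent_intervals
        (hcont.intervalIntegrable (μ := volume) 0 (0 + h n))
        (hcont.intervalIntegrable (0 + h n) (t + h n))
      rw [hG]; simp only; linarith
    have h2 : (∫ s in (0:ℝ)..t, f s) = G t - G 0 := by simp [hG]
    rw [h1, h2]; ring
  have hlim2 : Tendsto (fun n => ∫ s in Set.Ioc 0 t, q n s) atTop (𝓝 (f t - f 0)) := by
    refine Tendsto.congr (fun n => ?_)
      ((seq_slope (hGd t) hh0 hhpos).sub (seq_slope (hGd 0) hh0 hhpos))
    rw [heval n]; ring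
  exact (tendsto_nhds_unique hlim2 hlim1)

instance unifBall_isProbability (d : ℕ) : IsProbabilityMeasure (unifBall d) := by
  constructor
  rw [unifBall, Measure.smul_apply, Measure.restrict_apply_univ, smul_eq_mul]
  exact ENNReal.inv_mul_cancel (measure_closedBall_pos volume 0 one_pos).ne'
    measure_closedBall_lt_top.ne

private theorem unifBall_null {d : ℕ} {s : Set (EuclideanSpace ℝ (Fin d))}
    (hs : volume s = 0) : unifBall d s = 0 := by
  rw [unifBall, Measure.smul_apply]
  have h1 : volume.restrict (closedBall (0 : EuclideanSpace ℝ (Fin d)) 1) s ≤ volume s :=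
    Measure.le_iff'.1 Measure.restrict_le_self s
  rw [hs] at h1
  simp [le_antisymm h1 zero_le]

private theorem integrable_shift {d : ℕ} {L : ℝ} {hL : 0 ≤ L} {δ : ℝ}
    {F : EuclideanSpace ℝ (Fin d) → ℝ} (hlipF : LipschitzWith ⟨L, hL⟩ F)
    (z : EuclideanSpace ℝ (Fin d)) :
    Integrable (fun v => F (z + δ • v)) (unifBall d) := by
  have hc : Continuous fun v : EuclideanSpace ℝ (Fin d) => F (z + δ • v) :=
    hlipF.continuous.comp (continuous_const.add (continuous_const_smul δ))
  have h1 : IntegrableOn (fun v : EuclideanSpace ℝ (Fin d) => F (z + δ • v))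
      (closedBall 0 1) volume :=
    hc.continuousOn.integrableOn_compact (isCompact_closedBall 0 1)
  exact h1.smul_measure (ENNReal.inv_ne_top.mpr (measure_closedBall_pos volume 0 one_pos).ne')

/-- Key lemma: the gradient of the smoothing at a point of `ball x δ` lies in the closure of
the Goldstein `2δ`-subdifferential of `F` at `x`. -/
private theorem grad_smooth_mem {d : ℕ} {L δ : ℝ} (hL : 0 ≤ L) (hδ : 0 < δ)
    {F : EuclideanSpace ℝ (Fin d) → ℝ} (hlipF : LipschitzWith ⟨L, hL⟩ F)
    {x y : EuclideanSpace ℝ (Fin d)} (hy : y ∈ ball x δ)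
    (hdiff : DifferentiableAt ℝ (fun z => ∫ v, F (z + δ • v) ∂(unifBall d)) y) :
    gradient (fun z => ∫ v, F (z + δ • v) ∂(unifBall d)) y ∈
      closure (goldsteinSubdiff F (2 * δ) x) := by
  set μ := unifBall d with hμ
  haveI : IsProbabilityMeasure μ := unifBall_isProbability d
  set Fh : EuclideanSpace ℝ (Fin d) → ℝ := fun z => ∫ v, F (z + δ • v) ∂μ with hFh
  by_contra hmem
  obtain ⟨f, b, hfb, hbg⟩ := geometric_hahn_banach_closed_point
    ((convex_convexHull ℝ _).closure) isClosed_closure hmem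
  set u := (InnerProductSpace.toDual ℝ (EuclideanSpace ℝ (Fin d))).symm f with hu
  have hfu : ∀ z, f z = (inner ℝ u z : ℝ) := fun z =>
    (InnerProductSpace.toDual_symm_apply).symm
  have hyx : dist y x < δ := mem_ball.1 hy
  have hr : 0 < δ - dist y x := by linarith
  set r := δ - dist y x with hrdef
  set t₀ := r / (‖u‖ + 1) with ht₀
  have hupos : (0:ℝ) < ‖u‖ + 1 := by positivity
  have ht₀pos : 0 < t₀ := div_pos hr hupos
  -- Claim A
  have key : ∀ t ∈ Set.Ioo (0:ℝ) t₀, Fh (y + t • u) - Fh y ≤ b * t := by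
    intro t ht
    obtain ⟨ht0, htt₀⟩ := ht
    have hsub : Fh (y + t • u) - Fh y
        = ∫ v, (F (y + t • u + δ • v) - F (y + δ • v)) ∂μ := by
      rw [hFh]
      exact (integral_sub (integrable_shift hlipF _) (integrable_shift hlipF _)).symm
    -- a.e. differentiability along lines, Fubini
    have hNnull : volume {z : EuclideanSpace ℝ (Fin d) | ¬ DifferentiableAt ℝ F z} = 0 := by
      have h1 := hlipF.ae_differentiableAt (μ := (volume : Measure (EuclideanSpace ℝ (Fin d))))
      rwa [ae_iff] at h1
    have hslice : ∀ s : ℝ,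
        μ {v : EuclideanSpace ℝ (Fin d) | ¬ DifferentiableAt ℝ F (y + s • u + δ • v)} = 0 := by
      intro s
      refine unifBall_null ?_
      have hset : {v : EuclideanSpace ℝ (Fin d) | ¬ DifferentiableAt ℝ F (y + s • u + δ • v)} =
          (fun v : EuclideanSpace ℝ (Fin d) => δ • v) ⁻¹'
            ((fun w : EuclideanSpace ℝ (Fin d) => (y + s • u) + w) ⁻¹'
              {z | ¬ DifferentiableAt ℝ F z}) := rfl
      rw [hset, Measure.addHaar_preimage_smul volume hδ.ne', measure_preimage_add, hNnull,
        mul_zero]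
    have hbadmeas : MeasurableSet
        {p : ℝ × EuclideanSpace ℝ (Fin d) | ¬ DifferentiableAt ℝ F (y + p.1 • u + δ • p.2)} := by
      have hc : Continuous fun p : ℝ × EuclideanSpace ℝ (Fin d) => y + p.1 • u + δ • p.2 :=
        (continuous_const.add (continuous_fst.smul continuous_const)).add
          (continuous_snd.const_smul δ)
      exact ((measurableSet_of_differentiableAt ℝ F).compl).preimage hc.measurable
    have hprod : (volume.prod μ)
        {p : ℝ × EuclideanSpace ℝ (Fin d) | ¬ DifferentiableAt ℝ F (y + p.1 • u + δ • p.2)}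
          = 0 := by
      rw [Measure.measure_prod_null hbadmeas]
      exact Eventually.of_forall fun s => hslice s
    have hswap : (μ.prod volume)
        {q : EuclideanSpace ℝ (Fin d) × ℝ | ¬ DifferentiableAt ℝ F (y + q.2 • u + δ • q.1)}
          = 0 := by
      have hset : {q : EuclideanSpace ℝ (Fin d) × ℝ |
          ¬ DifferentiableAt ℝ F (y + q.2 • u + δ • q.1)} = Prod.swap ⁻¹'
            {p : ℝ × EuclideanSpace ℝ (Fin d) |
              ¬ DifferentiableAt ℝ F (y + p.1 • u + δ • p.2)} := rfl
      rw [hset, ← Measure.map_apply measurable_swap hbadmeas, Measure.prod_swap, hprod]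
    have hv2 : ∀ᵐ v ∂μ, ∀ᵐ s : ℝ, DifferentiableAt ℝ F (y + s • u + δ • v) := by
      have hprodae : ∀ᵐ q : EuclideanSpace ℝ (Fin d) × ℝ ∂(μ.prod volume),
          DifferentiableAt ℝ F (y + q.2 • u + δ • q.1) := by
        rw [ae_iff]; exact hswap
      exact Measure.ae_ae_of_ae_prod hprodae
    have hv1 : ∀ᵐ v ∂μ, ‖v‖ ≤ 1 := by
      rw [hμ, unifBall]
      refine Measure.ae_smul_measure ?_ _
      filter_upwards [ae_restrict_mem measurableSet_closedBall] with v hv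
      simpa using mem_closedBall_iff_norm.1 hv
    have hae2 : ∀ᵐ v ∂μ, F (y + t • u + δ • v) - F (y + δ • v) ≤ b * t := by
      filter_upwards [hv1, hv2] with v hvnorm hvdiff
      set g : ℝ → ℝ := fun s => F (y + s • u + δ • v) with hg
      have hA : LipschitzWith ‖u‖₊ (fun s : ℝ => y + s • u + δ • v) := by
        refine LipschitzWith.of_dist_le_mul fun s₁ s₂ => ?_
        have hd : y + s₁ • u + δ • v - (y + s₂ • u + δ • v) = (s₁ - s₂) • u := by
          rw [sub_smul]; abel
        rw [dist_eq_norm, hd, norm_smul, Real.dist_eq, Real.norm_eq_abs, mul_comm, coe_nnnorm]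
      have hglip : LipschitzWith (⟨L, hL⟩ * ‖u‖₊) g := hlipF.comp hA
      have hftc : g t - g 0 = ∫ s in Set.Ioc 0 t, deriv g s := lip_ftc hglip ht0
      have hg0 : F (y + δ • v) = g 0 := by simp [hg]
      have hgt : F (y + t • u + δ • v) = g t := rfl
      rw [hg0, hgt, hftc]
      -- bound the derivative a.e.
      have hbd : ∀ᵐ s ∂(volume.restrict (Set.Ioc 0 t)), deriv g s ≤ b := by
        rw [ae_restrict_iff' measurableSet_Ioc]
        filter_upwards [hvdiff] with s hsdiff hsIoc
        have hz : y + s • u + δ • v ∈ ball x (2 * δ) := by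
          rw [mem_ball, dist_eq_norm]
          have hdecomp : y + s • u + δ • v - x = (y - x) + (s • u + δ • v) := by abel
          have h1 : ‖y + s • u + δ • v - x‖ ≤ ‖y - x‖ + (‖s • u‖ + ‖δ • v‖) := by
            rw [hdecomp]
            exact (norm_add_le _ _).trans (by gcongr; exact norm_add_le _ _)
          have h2 : ‖s • u‖ ≤ t * ‖u‖ := by
            rw [norm_smul, Real.norm_eq_abs, abs_of_pos hsIoc.1]
            exact mul_le_mul_of_nonneg_right hsIoc.2 (norm_nonneg u)
          have h3 : t * ‖u‖ < r := by
            have : t * (‖u‖ + 1) < t₀ * (‖u‖ + 1) := by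
              exact mul_lt_mul_of_pos_right htt₀ hupos
            have ht₀r : t₀ * (‖u‖ + 1) = r := div_mul_cancel₀ r hupos.ne'
            nlinarith [norm_nonneg u]
          have h4 : ‖δ • v‖ ≤ δ := by
            rw [norm_smul, Real.norm_eq_abs, abs_of_pos hδ]
            nlinarith
          have h5 : ‖y - x‖ = dist y x := (dist_eq_norm y x).symm
          nlinarith
        have hline : HasDerivAt (fun σ : ℝ => y + σ • u + δ • v) u s := by
          simpa using (((hasDerivAt_id s).smul_const u).const_add y).add_const (δ • v)
        have hder : HasDerivAt g (fderiv ℝ F (y + s • u + δ • v) u) s :=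
          hsdiff.hasFDerivAt.comp_hasDerivAt s hline
        rw [hder.deriv]
        have hfd : fderiv ℝ F (y + s • u + δ • v)
            = InnerProductSpace.toDual ℝ _ (gradient F (y + s • u + δ • v)) :=
          (hsdiff.hasGradientAt.hasFDerivAt).fderiv
        have hmem2 : gradient F (y + s • u + δ • v) ∈ goldsteinSubdiff F (2 * δ) x :=
          subset_convexHull ℝ _ ⟨_, hz, hsdiff, rfl⟩
        have hlt := hfb _ (subset_closure hmem2)
        rw [hfu] at hlt
        rw [hfd]
        rw [InnerProductSpace.toDual_apply_apply, real_inner_comm]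
        exact hlt.le
      -- integrate the bound
      have hM : ∀ s : ℝ, ‖deriv g s‖ ≤ ((⟨L, hL⟩ * ‖u‖₊ : NNReal) : ℝ) := by
        intro s
        by_cases hd : DifferentiableAt ℝ g s
        · exact norm_deriv_le_of_lipschitz (𝕜 := ℝ) hglip
        · rw [deriv_zero_of_not_differentiableAt hd, norm_zero]
          positivity
      have hIocfin : volume (Set.Ioc (0:ℝ) t) < ⊤ := by
        simp [Real.volume_Ioc]
      have hconstM : IntegrableOn (fun _ : ℝ => ((⟨L, hL⟩ * ‖u‖₊ : NNReal) : ℝ))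
          (Set.Ioc 0 t) volume := (integrableOn_const_iff).mpr (Or.inr hIocfin)
      have hconstb : IntegrableOn (fun _ : ℝ => b) (Set.Ioc 0 t) volume :=
        (integrableOn_const_iff).mpr (Or.inr hIocfin)
      have hder_int : IntegrableOn (deriv g) (Set.Ioc 0 t) volume := by
        refine Integrable.mono' hconstM
          ((measurable_deriv g).aestronglyMeasurable) ?_
        exact Eventually.of_forall fun s => hM s
      have hstep : ∫ s in Set.Ioc 0 t, deriv g s ≤ ∫ _s in Set.Ioc 0 t, b :=
        setIntegral_mono_ae_restrict hder_int hconstb hbd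
      refine hstep.trans ?_
      rw [setIntegral_const]
      simp [Real.volume_Ioc, ENNReal.toReal_ofReal ht0.le, mul_comm, smul_eq_mul, max_eq_left ht0.le]
    rw [hsub]
    calc ∫ v, (F (y + t • u + δ • v) - F (y + δ • v)) ∂μ ≤ ∫ _v, b * t ∂μ :=
          integral_mono_ae ((integrable_shift hlipF _).sub (integrable_shift hlipF _))
            (integrable_const _) hae2
      _ = b * t := by simp
  -- directional derivative
  have hline0 : HasDerivAt (fun s : ℝ => y + s • u) u 0 := by
    simpa using ((hasDerivAt_id (0:ℝ)).smul_const u).const_add y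
  have hφ : HasDerivAt (fun s : ℝ => Fh (y + s • u)) (fderiv ℝ Fh y u) 0 := by
    have h0 : HasFDerivAt Fh (fderiv ℝ Fh y) (y + (0:ℝ) • u) := by
      simpa using hdiff.hasFDerivAt
    exact h0.comp_hasDerivAt 0 hline0
  have hle : fderiv ℝ Fh y u ≤ b := by
    have hslope : Tendsto (slope (fun s : ℝ => Fh (y + s • u)) 0) (𝓝[>] 0)
        (𝓝 (fderiv ℝ Fh y u)) :=
      (hasDerivAt_iff_tendsto_slope.1 hφ).mono_left
        (nhdsWithin_mono _ (fun z hz => ne_of_gt hz))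
    refine le_of_tendsto hslope ?_
    filter_upwards [Ioo_mem_nhdsGT_of_mem (Set.mem_Ico.mpr ⟨le_refl _, ht₀pos⟩)] with t ht
    have h1 := key t ht
    have ht0 : (0:ℝ) < t := ht.1
    rw [slope_def_field]
    rw [div_le_iff₀ (by simpa using ht0)]
    simpa using by linarith
  have hgb : f (gradient Fh y) = fderiv ℝ Fh y u := by
    have hfd : fderiv ℝ Fh y = InnerProductSpace.toDual ℝ _ (gradient Fh y) :=
      (hdiff.hasGradientAt.hasFDerivAt).fderiv
    rw [hfd, InnerProductSpace.toDual_apply_apply, real_inner_comm, hfu]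
  rw [hgb] at hbg
  linarith

theorem goldstein_smoothing_reduction (d : ℕ) (L δ ε : ℝ) (hL : 0 ≤ L) (hδ : 0 < δ)
    (F : EuclideanSpace ℝ (Fin d) → ℝ)
    (hlip : ∀ x y, |F x - F y| ≤ L * ‖x - y‖)
    (x : EuclideanSpace ℝ (Fin d))
    (hx : goldsteinNorm (fun x => ∫ v, F (x + δ • v) ∂(unifBall d)) δ x ≤ ε) :
    goldsteinNorm F (2 * δ) x ≤ ε := by
  have hlipF : LipschitzWith ⟨L, hL⟩ F := by
    refine LipschitzWith.of_dist_le_mul fun a b => ?_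
    rw [Real.dist_eq, dist_eq_norm]
    exact hlip a b
  set Fh : EuclideanSpace ℝ (Fin d) → ℝ := fun z => ∫ v, F (z + δ • v) ∂(unifBall d) with hFh
  have hlipFh : LipschitzWith ⟨L, hL⟩ Fh := by
    refine LipschitzWith.of_dist_le_mul fun a c => ?_
    rw [Real.dist_eq, hFh]
    have hsub : (∫ v, F (a + δ • v) ∂(unifBall d)) - (∫ v, F (c + δ • v) ∂(unifBall d))
        = ∫ v, (F (a + δ • v) - F (c + δ • v)) ∂(unifBall d) :=
      (integral_sub (integrable_shift hlipF _) (integrable_shift hlipF _)).symm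
    simp only
    rw [hsub]
    have hb : ∀ᵐ v ∂(unifBall d), ‖F (a + δ • v) - F (c + δ • v)‖ ≤ L * dist a c := by
      refine Eventually.of_forall fun v => ?_
      rw [Real.norm_eq_abs]
      calc |F (a + δ • v) - F (c + δ • v)| ≤ L * ‖(a + δ • v) - (c + δ • v)‖ := hlip _ _
        _ = L * dist a c := by rw [dist_eq_norm]; congr 2; abel
    calc |∫ v, (F (a + δ • v) - F (c + δ • v)) ∂(unifBall d)|
        ≤ L * dist a c * (unifBall d Set.univ).toReal := by
          rw [← Real.norm_eq_abs]
          exact norm_integral_le_of_norm_le_const hb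
      _ = (⟨L, hL⟩ : NNReal) * dist a c := by simp
  -- closure of the 2δ Goldstein subdifferential
  set K := closure (goldsteinSubdiff F (2 * δ) x) with hK
  have hsubset : goldsteinSubdiff Fh δ x ⊆ K := by
    refine convexHull_min ?_ ((convex_convexHull ℝ _).closure)
    rintro g ⟨y, hy, hdiff, rfl⟩
    exact grad_smooth_mem hL hδ hlipF hy hdiff
  -- nonemptiness of the smoothed subdifferential
  have hne : (goldsteinSubdiff Fh δ x).Nonempty := by
    have hae := hlipFh.ae_differentiableAt (μ := (volume : Measure (EuclideanSpace ℝ (Fin d))))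
    have hball : volume (ball x δ) ≠ 0 := (measure_ball_pos volume x hδ).ne'
    have hnonempty : (ball x δ ∩ {z | DifferentiableAt ℝ Fh z}).Nonempty := by
      rw [Set.nonempty_iff_ne_empty]
      intro hcontra
      have hsub2 : ball x δ ⊆ {z | ¬ DifferentiableAt ℝ Fh z} := by
        intro z hz
        by_contra hzz
        exact Set.eq_empty_iff_forall_notMem.1 hcontra z ⟨hz, not_not.1 hzz⟩
      have : volume (ball x δ) = 0 := by
        refine measure_mono_null hsub2 ?_
        rwa [ae_iff] at hae
      exact hball this
    obtain ⟨y, hy, hdy⟩ := hnonempty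
    exact ⟨gradient Fh y, subset_convexHull ℝ _ ⟨y, hy, hdy, rfl⟩⟩
  -- compare the two infima
  have hmain : goldsteinNorm F (2 * δ) x ≤ goldsteinNorm Fh δ x := by
    rw [goldsteinNorm]
    refine le_csInf (hne.image _) ?_
    rintro c ⟨g, hg, rfl⟩
    have hgK : g ∈ K := hsubset hg
    refine le_of_forall_pos_le_add fun η hη => ?_
    obtain ⟨s, hs, hds⟩ := Metric.mem_closure_iff.1 hgK η hη
    have h1 : sInf (norm '' goldsteinSubdiff F (2 * δ) x) ≤ ‖s‖ := by
      refine csInf_le ⟨0, ?_⟩ (Set.mem_image_of_mem _ hs)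
      rintro w ⟨w', _, rfl⟩
      exact norm_nonneg w'
    have h2 : ‖s‖ ≤ ‖g‖ + η := by
      have := norm_sub_norm_le s g
      rw [dist_comm, dist_eq_norm] at hds
      linarith
    linarith
  exact hmain.trans hx
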